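/- (Theorem, Case 1: shortest distances to two radars.) Let A, B ∈ EuclideanSpace ℝ (Fin 2) with A ≠ B, and let r₁, r₂ ≥ 0. Then the set of lines (one-dimensional affine subspaces ℓ of the plane) satisfying Metric.infDist A ℓ = r₁ and Metric.infDist B ℓ = r₂ is finite and has at most 4 elements. (Given the shortest distances of the bomber's straight trajectory to two distinct radars, there are at most 4 potential trajectories: the common tangent lines of the two circles.) -/

import Mathlib

open scoped RealInnerProductSpace
noncomputable section
abbrev E2 := EuclideanSpace ℝ (Fin 2)

def rot2 (u : E2) : E2 := !₂[-(u 1), u 0]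

lemma inner_coords (x y : E2) : ⟪x, y⟫ = x 0 * y 0 + x 1 * y 1 := by
  simp [PiLp.inner_apply, Fin.sum_univ_two]; ring

lemma rot2_apply0 (u : E2) : rot2 u 0 = -(u 1) := rfl
lemma rot2_apply1 (u : E2) : rot2 u 1 = u 0 := rfl

lemma inner_rot2_self (u : E2) : ⟪u, rot2 u⟫ = 0 := by
  simp [inner_coords, rot2_apply0, rot2_apply1]; ring

lemma norm_sq_coords (x : E2) : ‖x‖ ^ 2 = x 0 ^ 2 + x 1 ^ 2 := by
  rw [← real_inner_self_eq_norm_sq, inner_coords]; ring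

lemma norm_rot2 (u : E2) : ‖rot2 u‖ = ‖u‖ := by
  have h1 : ‖rot2 u‖ ^ 2 = ‖u‖ ^ 2 := by
    rw [norm_sq_coords, norm_sq_coords, rot2_apply0, rot2_apply1]; ring
  rw [← Real.sqrt_sq (norm_nonneg (rot2 u)), ← Real.sqrt_sq (norm_nonneg u), h1]

lemma eq_zero_of_orth (a b w : E2) (hdet : a 0 * b 1 - a 1 * b 0 ≠ 0)
    (h1 : ⟪a, w⟫ = 0) (h2 : ⟪b, w⟫ = 0) : w = 0 := by
  rw [inner_coords] at h1 h2
  ext i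
  fin_cases i
  · show w 0 = 0
    have h3 : (a 0 * b 1 - a 1 * b 0) * w 0 = b 1 * (a 0 * w 0 + a 1 * w 1) - a 1 * (b 0 * w 0 + b 1 * w 1) := by ring
    rw [h1, h2] at h3
    rcases mul_eq_zero.mp (by linarith : (a 0 * b 1 - a 1 * b 0) * w 0 = 0) with h | h
    · exact absurd h hdet
    · exact h
  · show w 1 = 0
    have h3 : (a 0 * b 1 - a 1 * b 0) * w 1 = a 0 * (b 0 * w 0 + b 1 * w 1) - b 0 * (a 0 * w 0 + a 1 * w 1) := by ring
    rw [h1, h2] at h3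
    rcases mul_eq_zero.mp (by linarith : (a 0 * b 1 - a 1 * b 0) * w 1 = 0) with h | h
    · exact absurd h hdet
    · exact h

/-- the coercion of the line through `p` with direction `span (rot2 n)` is the plane
`⟪n, ·⟫ = ⟪n, p⟫`, for `n` a unit vector. -/
lemma mk'_coe_eq_plane (n p : E2) (hn : ‖n‖ = 1) :
    (AffineSubspace.mk' p (ℝ ∙ rot2 n) : Set E2) = {x : E2 | ⟪n, x⟫ = ⟪n, p⟫} := by
  have hnsq : ⟪n, n⟫ = 1 := by rw [real_inner_self_eq_norm_sq, hn]; norm_num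
  ext x
  simp only [SetLike.mem_coe, AffineSubspace.mem_mk', Set.mem_setOf_eq,
    Submodule.mem_span_singleton]
  constructor
  · rintro ⟨t, ht⟩
    have hx : x - p = t • rot2 n := by
      rw [vsub_eq_sub] at ht; exact ht.symm
    have : ⟪n, x - p⟫ = 0 := by
      rw [hx, real_inner_smul_right, inner_rot2_self]; ring
    rw [inner_sub_right] at this
    linarith
  · intro hx
    have h0 : ⟪n, x - p⟫ = 0 := by rw [inner_sub_right]; linarith
    set w : E2 := (x - p) - ⟪rot2 n, x - p⟫ • rot2 n with hw
    have hnw : ⟪n, w⟫ = 0 := by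
      rw [hw, inner_sub_right, real_inner_smul_right, inner_rot2_self, h0]; ring
    have hrw : ⟪rot2 n, w⟫ = 0 := by
      rw [hw, inner_sub_right, real_inner_smul_right, real_inner_self_eq_norm_sq, norm_rot2, hn]
      ring
    have hdet : n 0 * rot2 n 1 - n 1 * rot2 n 0 ≠ 0 := by
      rw [rot2_apply0, rot2_apply1]
      have := norm_sq_coords n
      rw [hn] at this
      intro h; nlinarith
    have hw0 : w = 0 := eq_zero_of_orth n (rot2 n) w hdet hnw hrw
    have hxp : x - p = ⟪rot2 n, x - p⟫ • rot2 n := by rwa [sub_eq_zero] at hw0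
    exact ⟨⟪rot2 n, x - p⟫, by rw [vsub_eq_sub]; exact hxp.symm⟩

lemma plane_nonempty (n : E2) (hn : ‖n‖ = 1) (c : ℝ) : {x : E2 | ⟪n, x⟫ = c}.Nonempty := by
  have hnsq : ⟪n, n⟫ = (1:ℝ) := by rw [real_inner_self_eq_norm_sq, hn]; norm_num
  exact ⟨c • n, by simp only [Set.mem_setOf_eq, real_inner_smul_right, hnsq, mul_one]⟩

lemma infDist_plane (n : E2) (hn : ‖n‖ = 1) (c : ℝ) (P : E2) :
    Metric.infDist P {x : E2 | ⟪n, x⟫ = c} = |⟪n, P⟫ - c| := by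
  have hnsq : ⟪n, n⟫ = (1:ℝ) := by rw [real_inner_self_eq_norm_sq, hn]; norm_num
  have hne := plane_nonempty n hn c
  apply le_antisymm
  · have hq : P - (⟪n, P⟫ - c) • n ∈ {x : E2 | ⟪n, x⟫ = c} := by
      simp only [Set.mem_setOf_eq, inner_sub_right, real_inner_smul_right, hnsq]; ring
    calc Metric.infDist P {x : E2 | ⟪n, x⟫ = c} ≤ dist P (P - (⟪n, P⟫ - c) • n) :=
          Metric.infDist_le_dist_of_mem hq
      _ = |⟪n, P⟫ - c| := by
          rw [dist_eq_norm, sub_sub_cancel, norm_smul, hn, mul_one, Real.norm_eq_abs]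
  · rw [Metric.infDist_eq_iInf]
    have : Nonempty {x : E2 // x ∈ {x : E2 | ⟪n, x⟫ = c}} := hne.to_subtype
    apply le_ciInf
    intro y
    have hy : ⟪n, (y : E2)⟫ = c := y.2
    calc |⟪n, P⟫ - c| = |⟪n, P - y⟫| := by rw [inner_sub_right, hy]
      _ ≤ ‖n‖ * ‖P - (y : E2)‖ := abs_real_inner_le_norm n _
      _ = dist P y := by rw [hn, one_mul, dist_eq_norm]

lemma rot2_smul (a : ℝ) (v : E2) : rot2 (a • v) = a • rot2 v := by
  ext i; fin_cases i
  · show -(( a • v) 1) = a * rot2 v 0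
    simp [rot2_apply0]
  · show (a • v) 0 = a * rot2 v 1
    simp [rot2_apply1]

lemma rot2_rot2 (v : E2) : rot2 (rot2 v) = -v := by
  ext i; fin_cases i
  · show -(rot2 v 1) = (-v) 0
    simp [rot2_apply1]
  · show rot2 v 0 = (-v) 1
    simp [rot2_apply0]

lemma rot2_ne_zero {v : E2} (hv : v ≠ 0) : rot2 v ≠ 0 := by
  intro h
  apply hv
  have := norm_rot2 v
  rw [h, norm_zero] at this
  exact norm_eq_zero.mp this.symm

/-- Every line in the plane is, as a set, a plane `{x | ⟪n, x⟫ = c}` for a unit normal `n`. -/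
lemma exists_unit_normal (ℓ : AffineSubspace ℝ E2) (h1 : Module.finrank ℝ ℓ.direction = 1) :
    ∃ (n : E2) (c : ℝ), ‖n‖ = 1 ∧ (ℓ : Set E2) = {x : E2 | ⟪n, x⟫ = c} := by
  -- ℓ is nonempty
  have hne : (ℓ : Set E2).Nonempty := by
    rcases (ℓ : Set E2).eq_empty_or_nonempty with h | h
    · exfalso
      rw [ℓ.coe_eq_bot_iff] at h
      rw [h, AffineSubspace.direction_bot] at h1
      simp at h1
    · exact h
  obtain ⟨p, hp⟩ := hne
  -- direction is spanned by a nonzero vector v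
  have : Nontrivial ℓ.direction := by
    apply Module.nontrivial_of_finrank_pos (R := ℝ)
    omega
  obtain ⟨v', hv'⟩ := exists_ne (0 : ℓ.direction)
  set v : E2 := (v' : E2) with hv
  have hvne : v ≠ 0 := fun h => hv' (Subtype.ext h)
  have hvmem : v ∈ ℓ.direction := v'.2
  have hspan : ℓ.direction = ℝ ∙ v := by
    symm
    apply Submodule.eq_of_le_of_finrank_le
    · rwa [Submodule.span_singleton_le_iff_mem]
    · rw [h1, finrank_span_singleton hvne]
  -- unit normal
  set n : E2 := ‖v‖⁻¹ • rot2 v with hn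
  have hvnorm : ‖v‖ ≠ 0 := norm_ne_zero_iff.mpr hvne
  have hnnorm : ‖n‖ = 1 := by
    rw [hn, norm_smul, norm_inv, norm_norm, norm_rot2, inv_mul_cancel₀ hvnorm]
  -- span of rot2 n equals span of v
  have hrot : (ℝ ∙ rot2 n : Submodule ℝ E2) = ℝ ∙ v := by
    have h2 : rot2 n = ‖v‖⁻¹ • (-v) := by rw [hn, rot2_smul, rot2_rot2]
    apply le_antisymm
    · rw [Submodule.span_singleton_le_iff_mem, h2]
      exact Submodule.smul_mem _ _ (Submodule.neg_mem _ (Submodule.mem_span_singleton_self v))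
    · rw [Submodule.span_singleton_le_iff_mem]
      refine Submodule.mem_span_singleton.mpr ⟨-‖v‖, ?_⟩
      rw [h2, smul_smul, neg_mul, mul_inv_cancel₀ hvnorm]
      simp
  have hℓ : ℓ = AffineSubspace.mk' p (ℝ ∙ rot2 n) := by
    apply AffineSubspace.ext_of_direction_eq
    · rw [AffineSubspace.direction_mk', hrot, hspan]
    · exact ⟨p, hp, AffineSubspace.self_mem_mk' p _⟩
  refine ⟨n, ⟪n, p⟫, hnnorm, ?_⟩
  rw [hℓ]
  exact mk'_coe_eq_plane n p hnnorm

def candLine (n : E2) (c : ℝ) : AffineSubspace ℝ E2 := AffineSubspace.mk' (c • n) (ℝ ∙ rot2 n)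

lemma candLine_coe (n : E2) (hn : ‖n‖ = 1) (c : ℝ) :
    (candLine n c : Set E2) = {x : E2 | ⟪n, x⟫ = c} := by
  have h : ⟪n, c • n⟫ = c := by
    rw [real_inner_smul_right, real_inner_self_eq_norm_sq, hn]; ring
  rw [candLine, mk'_coe_eq_plane n _ hn, h]

/-- a unit vector with prescribed inner product against a fixed nonzero vector `u`
is one of two explicit vectors. -/
lemma normal_determination (u m : E2) (hu : u ≠ 0) (hm : ‖m‖ = 1) (d : ℝ)
    (hd : ⟪m, u⟫ = d) :
    m = (d / ‖u‖ ^ 2) • u + (1 * Real.sqrt (1 - d ^ 2 / ‖u‖ ^ 2)) • (‖u‖⁻¹ • rot2 u) ∨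
    m = (d / ‖u‖ ^ 2) • u + ((-1) * Real.sqrt (1 - d ^ 2 / ‖u‖ ^ 2)) • (‖u‖⁻¹ • rot2 u) := by
  set D : ℝ := ‖u‖ ^ 2 with hD
  have hnu : ‖u‖ ≠ 0 := norm_ne_zero_iff.mpr hu
  have hDpos : 0 < D := by positivity
  set uh : E2 := ‖u‖⁻¹ • rot2 u with huh
  have huhnorm : ‖uh‖ = 1 := by
    rw [huh, norm_smul, norm_inv, norm_norm, norm_rot2, inv_mul_cancel₀ hnu]
  have huu : ⟪u, u⟫ = D := by rw [real_inner_self_eq_norm_sq, hD]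
  have huuh : ⟪u, uh⟫ = 0 := by
    rw [huh, real_inner_smul_right, inner_rot2_self]; ring
  have huhuh : ⟪uh, uh⟫ = 1 := by
    rw [real_inner_self_eq_norm_sq, huhnorm]; norm_num
  set lam : ℝ := ⟪uh, m⟫ with hlam
  have hum : ⟪u, m⟫ = d := by rw [real_inner_comm]; exact hd
  have hru : ⟪rot2 u, u⟫ = 0 := by rw [real_inner_comm]; exact inner_rot2_self u
  have hruh : ⟪rot2 u, uh⟫ = ‖u‖ := by
    rw [huh, real_inner_smul_right, real_inner_self_eq_norm_sq, norm_rot2]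
    field_simp
  -- decomposition
  have hdecomp : m = (d / D) • u + lam • uh := by
    have hrm : ⟪rot2 u, m⟫ = ‖u‖ * lam := by
      rw [hlam, huh, real_inner_smul_left]
      field_simp
    set w : E2 := m - ((d / D) • u + lam • uh) with hw
    have h1 : ⟪u, w⟫ = 0 := by
      rw [hw, inner_sub_right, inner_add_right, real_inner_smul_right,
        real_inner_smul_right, huu, huuh, hum]
      field_simp
      ring
    have h2 : ⟪rot2 u, w⟫ = 0 := by
      rw [hw, inner_sub_right, inner_add_right, real_inner_smul_right,
        real_inner_smul_right, hru, hruh, hrm]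
      ring
    have hdet : u 0 * rot2 u 1 - u 1 * rot2 u 0 ≠ 0 := by
      rw [rot2_apply0, rot2_apply1]
      have h3 := norm_sq_coords u
      rw [← hD] at h3
      intro h; nlinarith
    have := eq_zero_of_orth u (rot2 u) w hdet h1 h2
    rw [hw, sub_eq_zero] at this
    exact this
  -- size of lam
  have hlamsq : lam ^ 2 = 1 - d ^ 2 / D := by
    have hmm : ⟪m, m⟫ = 1 := by rw [real_inner_self_eq_norm_sq, hm]; norm_num
    rw [hdecomp] at hmm
    have e1 : ⟪(d / D) • u, (d / D) • u⟫ = (d / D) * ((d / D) * D) := by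
      rw [real_inner_smul_left, real_inner_smul_right, huu]
    have e2 : ⟪(d / D) • u, lam • uh⟫ = (d / D) * (lam * 0) := by
      rw [real_inner_smul_left, real_inner_smul_right, huuh]
    have e3 : ⟪lam • uh, lam • uh⟫ = lam * (lam * 1) := by
      rw [real_inner_smul_left, real_inner_smul_right, huhuh]
    have huhu : ⟪uh, u⟫ = 0 := by rw [real_inner_comm]; exact huuh
    have e4 : ⟪lam • uh, (d / D) • u⟫ = lam * ((d / D) * 0) := by
      rw [real_inner_smul_left, real_inner_smul_right, huhu]
    rw [inner_add_add_self, e1, e2, e3, e4] at hmm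
    field_simp at hmm ⊢
    nlinarith [hmm]
  have habs : |lam| = Real.sqrt (1 - d ^ 2 / D) := by
    rw [← hlamsq, Real.sqrt_sq_eq_abs]
  rcases abs_cases lam with ⟨h, _⟩ | ⟨h, _⟩
  · left; rw [hdecomp, one_mul, ← habs, h]
  · right; rw [hdecomp, neg_one_mul, ← habs, h, neg_neg]


/-- Case 1: given the shortest distances `r₁`, `r₂` of a straight trajectory
to two distinct radars `A`, `B`, there are at most 4 potential trajectories:
the set of lines at distance `r₁` from `A` and `r₂` from `B` is finite with at
most 4 elements. -/
theorem lines_at_given_distances_finite (A B : EuclideanSpace ℝ (Fin 2)) (hAB : A ≠ B)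
    (r₁ r₂ : ℝ) (hr₁ : 0 ≤ r₁) (hr₂ : 0 ≤ r₂) :
    {ℓ : AffineSubspace ℝ (EuclideanSpace ℝ (Fin 2)) |
        Module.finrank ℝ ℓ.direction = 1 ∧
        Metric.infDist A (ℓ : Set (EuclideanSpace ℝ (Fin 2))) = r₁ ∧
        Metric.infDist B (ℓ : Set (EuclideanSpace ℝ (Fin 2))) = r₂}.Finite ∧
    {ℓ : AffineSubspace ℝ (EuclideanSpace ℝ (Fin 2)) |
        Module.finrank ℝ ℓ.direction = 1 ∧
        Metric.infDist A (ℓ : Set (EuclideanSpace ℝ (Fin 2))) = r₁ ∧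
        Metric.infDist B (ℓ : Set (EuclideanSpace ℝ (Fin 2))) = r₂}.ncard ≤ 4 := by
  set u : E2 := A - B with hu'
  have hu : u ≠ 0 := sub_ne_zero.mpr hAB
  set N : ℝ → ℝ → E2 := fun d s =>
    (d / ‖u‖ ^ 2) • u + (s * Real.sqrt (1 - d ^ 2 / ‖u‖ ^ 2)) • (‖u‖⁻¹ • rot2 u) with hN
  set C : ℝ → ℝ → AffineSubspace ℝ E2 := fun d s => candLine (N d s) (⟪N d s, A⟫ - r₁) with hC
  set Y : Set (AffineSubspace ℝ E2) :=
    {C (r₁ - r₂) 1, C (r₁ - r₂) (-1), C (r₁ + r₂) 1, C (r₁ + r₂) (-1)} with hY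
  have hsub : {ℓ : AffineSubspace ℝ (EuclideanSpace ℝ (Fin 2)) |
        Module.finrank ℝ ℓ.direction = 1 ∧
        Metric.infDist A (ℓ : Set (EuclideanSpace ℝ (Fin 2))) = r₁ ∧
        Metric.infDist B (ℓ : Set (EuclideanSpace ℝ (Fin 2))) = r₂} ⊆ Y := by
    rintro ℓ ⟨hdim, hdA, hdB⟩
    obtain ⟨n, c, hn, hset⟩ := exists_unit_normal ℓ hdim
    rw [hset, infDist_plane n hn c] at hdA hdB
    -- normalize the sign so that the distance to A is signed `+r₁`
    obtain ⟨m, e, hm, hsm, hmA, hmB⟩ : ∃ (m : E2) (e : ℝ), ‖m‖ = 1 ∧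
        (ℓ : Set E2) = {x : E2 | ⟪m, x⟫ = e} ∧ ⟪m, A⟫ - e = r₁ ∧ |⟪m, B⟫ - e| = r₂ := by
      rcases (abs_eq hr₁).mp hdA with h | h
      · exact ⟨n, c, hn, hset, h, hdB⟩
      · refine ⟨-n, -c, by rw [norm_neg]; exact hn, ?_, ?_, ?_⟩
        · rw [hset]; ext x
          simp only [Set.mem_setOf_eq, inner_neg_left, neg_inj]
        · rw [inner_neg_left]; linarith
        · rw [inner_neg_left, show -⟪n, B⟫ - -c = -(⟪n, B⟫ - c) by ring, abs_neg]; exact hdB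
    have hℓeq : ∀ d : ℝ, ⟪m, u⟫ = d → (ℓ = C d 1 ∨ ℓ = C d (-1)) := by
      intro d hd
      have he : e = ⟪m, A⟫ - r₁ := by linarith
      rcases normal_determination u m hu hm d hd with h | h
      · left
        have hmN : m = N d 1 := h
        apply SetLike.coe_injective
        show (ℓ : Set E2) = (candLine (N d 1) (⟪N d 1, A⟫ - r₁) : Set E2)
        rw [hsm, candLine_coe _ (by rw [← hmN]; exact hm) _, ← hmN, he]
      · right
        have hmN : m = N d (-1) := h
        apply SetLike.coe_injective
        show (ℓ : Set E2) = (candLine (N d (-1)) (⟪N d (-1), A⟫ - r₁) : Set E2)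
        rw [hsm, candLine_coe _ (by rw [← hmN]; exact hm) _, ← hmN, he]
    have hdinner : ⟪m, u⟫ = ⟪m, A⟫ - ⟪m, B⟫ := by rw [hu', inner_sub_right]
    rcases (abs_eq hr₂).mp hmB with h | h
    · have hd : ⟪m, u⟫ = r₁ - r₂ := by rw [hdinner]; linarith
      rcases hℓeq _ hd with h' | h'
      · exact Or.inl h'
      · exact Or.inr (Or.inl h')
    · have hd : ⟪m, u⟫ = r₁ + r₂ := by rw [hdinner]; linarith
      rcases hℓeq _ hd with h' | h'
      · exact Or.inr (Or.inr (Or.inl h'))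
      · exact Or.inr (Or.inr (Or.inr h'))
  have hYfin : Y.Finite := by
    rw [hY]
    exact (Set.finite_singleton _).insert _ |>.insert _ |>.insert _
  constructor
  · exact hYfin.subset hsub
  · calc _ ≤ Y.ncard := Set.ncard_le_ncard hsub hYfin
      _ ≤ 4 := by
        rw [hY]
        calc ({C (r₁ - r₂) 1, C (r₁ - r₂) (-1), C (r₁ + r₂) 1, C (r₁ + r₂) (-1)} :
              Set (AffineSubspace ℝ E2)).ncard
            ≤ ({C (r₁ - r₂) (-1), C (r₁ + r₂) 1, C (r₁ + r₂) (-1)} :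
              Set (AffineSubspace ℝ E2)).ncard + 1 := Set.ncard_insert_le _ _
          _ ≤ (({C (r₁ + r₂) 1, C (r₁ + r₂) (-1)} :
              Set (AffineSubspace ℝ E2)).ncard + 1) + 1 :=
              add_le_add_left (Set.ncard_insert_le _ _) 1
          _ ≤ ((({C (r₁ + r₂) (-1)} :
              Set (AffineSubspace ℝ E2)).ncard + 1) + 1) + 1 :=
              add_le_add_left (add_le_add_left (Set.ncard_insert_le _ _) 1) 1
          _ ≤ 4 := by rw [Set.ncard_singleton]
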